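/- Let X be a Hilbert space, L : X → X* bounded self-dual with finite n⁻(L) and trivial kernel, and suppose w ∈ X satisfies ⟨Lw,w⟩ = 0 but Lw ≠ 0. Choose ψ ∈ X with ⟨Lw,ψ⟩ ≠ 0 and set S₀ = span{ψ, w}, S₁ = {ρ ∈ X : ⟨Lw,ρ⟩ = 0 and ⟨Lψ,ρ⟩ = 0}. Then X = S₀ ⊕ S₁, n⁻(L|_{S₀}) = 1, and n⁻(L) = n⁻(L|_{S₁}) + 1. -/

import Mathlib

open RealInnerProductSpace

variable {H : Type*} [NormedAddCommGroup H] [InnerProductSpace ℝ H]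

/-- The set of dimensions of subspaces of `W` on which the quadratic form of `L` is
negative definite. -/
def negSet (L : H →L[ℝ] H) (W : Submodule ℝ H) : Set ℕ :=
  {n : ℕ | ∃ V : Submodule ℝ H, V ≤ W ∧ (∀ u ∈ V, u ≠ 0 → ⟪L u, u⟫ < (0:ℝ)) ∧
    Module.finrank ℝ V = n}

/-- Negative Morse index of `L` restricted to `W`. -/
noncomputable def negIdxOn (L : H →L[ℝ] H) (W : Submodule ℝ H) : ℕ :=
  sSup (negSet L W)

lemma zero_mem_negSet (L : H →L[ℝ] H) (W : Submodule ℝ H) : 0 ∈ negSet L W :=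
  ⟨⊥, bot_le, fun u hu hne => absurd ((Submodule.mem_bot ℝ).mp hu) hne,
    finrank_bot ℝ H⟩

lemma negSet_mono (L : H →L[ℝ] H) {W W' : Submodule ℝ H} (h : W ≤ W') :
    negSet L W ⊆ negSet L W' := by
  rintro n ⟨V, hV, h2, h3⟩
  exact ⟨V, hV.trans h, h2, h3⟩

/-- A helper linear functional `u ↦ ⟪x, u⟫`. -/
noncomputable def innerFun (x : H) : H →ₗ[ℝ] ℝ where
  toFun u := ⟪x, u⟫
  map_add' a b := inner_add_right x a b
  map_smul' t a := by simp [real_inner_smul_right]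

@[simp] lemma innerFun_apply (x u : H) : innerFun x u = ⟪x, u⟫ := rfl

/-- Case 1b splitting: if ⟪Lw,w⟫ = 0 but Lw ≠ 0, ⟪Lw,ψ⟫ ≠ 0, S₀ = span{ψ,w},
S₁ = {ρ : ⟪Lw,ρ⟫ = 0 ∧ ⟪Lψ,ρ⟫ = 0}, then X = S₀ ⊕ S₁, n⁻(L|_{S₀}) = 1 and
n⁻(L) = n⁻(L|_{S₁}) + 1. -/
theorem stmt_16 [CompleteSpace H] (L : H →L[ℝ] H)
    (hsym : ∀ u v, ⟪L u, v⟫ = ⟪u, L v⟫)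
    (hfin : BddAbove (negSet L ⊤))
    (hker : ∀ u, L u = 0 → u = 0)
    (w ψ : H) (hw : ⟪L w, w⟫ = (0:ℝ)) (hLw : L w ≠ 0)
    (hψ : ⟪L w, ψ⟫ ≠ (0:ℝ))
    (S₁ : Submodule ℝ H)
    (hS₁ : ∀ ρ, ρ ∈ S₁ ↔ (⟪L w, ρ⟫ = (0:ℝ) ∧ ⟪L ψ, ρ⟫ = (0:ℝ))) :
    IsCompl (Submodule.span ℝ {ψ, w}) S₁ ∧
      negIdxOn L (Submodule.span ℝ {ψ, w}) = 1 ∧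
      negIdxOn L ⊤ = negIdxOn L S₁ + 1 := by
  have hsym2 : ∀ x y : H, ⟪L x, y⟫ = ⟪L y, x⟫ := fun x y =>
    (hsym x y).trans (real_inner_comm _ _)
  set a : ℝ := ⟪L w, ψ⟫ with ha_def
  set c : ℝ := ⟪L ψ, ψ⟫ with hc_def
  have haw : ⟪L ψ, w⟫ = a := hsym2 ψ w
  -- quadratic form expansion
  have expand : ∀ (s t : ℝ) (x y : H),
      ⟪L (s • x + t • y), s • x + t • y⟫ =
        s^2 * ⟪L x, x⟫ + 2*(s*t)*⟪L x, y⟫ + t^2 * ⟪L y, y⟫ := by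
    intro s t x y
    rw [map_add, map_smul, map_smul]
    simp only [inner_add_left, inner_add_right, real_inner_smul_left,
      real_inner_smul_right, ContinuousLinearMap.coe_smul', Pi.smul_apply,
      smul_eq_mul]
    rw [hsym2 y x]
    ring
  set β : ℝ := -(c+1)/(2*a) with hβ_def
  set v : H := ψ + β • w with hv_def
  have hv1 : v = (1:ℝ) • ψ + β • w := by rw [one_smul]
  have hqv : ⟪L v, v⟫ = -1 := by
    rw [hv1, expand, hw, haw]
    have h2a : (2*a) ≠ 0 := mul_ne_zero two_ne_zero hψ
    have hβa : β * (2*a) = -(c+1) := div_mul_cancel₀ _ h2a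
    linear_combination hβa
  have hLwv : ⟪L w, v⟫ = a := by
    rw [hv_def, inner_add_right, real_inner_smul_right, hw]
    ring
  have hv0 : v ≠ 0 := by
    intro h
    rw [h, inner_zero_right] at hLwv
    exact hψ hLwv.symm
  have hw0 : w ≠ 0 := fun h => hLw (by rw [h, map_zero])
  have hvS₀ : v ∈ Submodule.span ℝ {ψ, w} :=
    Submodule.mem_span_pair.mpr ⟨1, β, hv1.symm⟩
  -- values of the form on linear combinations of ψ and w
  have hinner_comb : ∀ (x : H) (α b : ℝ), ⟪L x, α • ψ + b • w⟫ =
      α * ⟪L x, ψ⟫ + b * ⟪L x, w⟫ := by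
    intro x α b
    rw [inner_add_right, real_inner_smul_right, real_inner_smul_right]
  -- IsCompl
  have hcompl : IsCompl (Submodule.span ℝ {ψ, w}) S₁ := by
    constructor
    · rw [Submodule.disjoint_def]
      intro x hx0 hx1
      obtain ⟨α, b, rfl⟩ := Submodule.mem_span_pair.mp hx0
      obtain ⟨h1, h2⟩ := (hS₁ _).mp hx1
      rw [hinner_comb, hw] at h1
      have hα : α = 0 := by
        have : α * a = 0 := by linarith [h1]
        exact (mul_eq_zero.mp this).resolve_right hψ
      rw [hinner_comb, haw, hα] at h2
      have hb : b = 0 := by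
        have : b * a = 0 := by linarith [h2]
        exact (mul_eq_zero.mp this).resolve_right hψ
      rw [hα, hb, zero_smul, zero_smul, add_zero]
    · rw [codisjoint_iff, eq_top_iff]
      intro x _
      set α : ℝ := ⟪L w, x⟫ / a with hα_def
      set b : ℝ := (⟪L ψ, x⟫ - α * c) / a with hb_def
      set s₀ : H := α • ψ + b • w with hs₀_def
      refine Submodule.mem_sup.mpr ⟨s₀, Submodule.mem_span_pair.mpr ⟨α, b, rfl⟩,
        x - s₀, (hS₁ _).mpr ⟨?_, ?_⟩, by abel⟩
      · rw [inner_sub_right, hinner_comb, hw, hα_def]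
        field_simp
        rw [← ha_def]; ring
      · rw [inner_sub_right, hinner_comb, haw, hb_def, ← hc_def]
        field_simp [hψ]
        ring
  -- negative definiteness of span {v}
  have hspanv_neg : ∀ u ∈ Submodule.span ℝ {v}, u ≠ 0 → ⟪L u, u⟫ < (0:ℝ) := by
    intro u hu hne
    obtain ⟨t, rfl⟩ := Submodule.mem_span_singleton.mp hu
    have ht : t ≠ 0 := fun h => hne (by rw [h, zero_smul])
    rw [map_smul, real_inner_smul_left, real_inner_smul_right, hqv]
    nlinarith [mul_self_pos.mpr ht]
  have hbdd : ∀ W : Submodule ℝ H, BddAbove (negSet L W) := fun W =>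
    hfin.mono (negSet_mono L le_top)
  have hnes : ∀ W : Submodule ℝ H, (negSet L W).Nonempty := fun W =>
    ⟨0, zero_mem_negSet L W⟩
  -- n⁻(S₀) = 1
  have hone_mem : 1 ∈ negSet L (Submodule.span ℝ {ψ, w}) :=
    ⟨Submodule.span ℝ {v},
      Submodule.span_le.mpr (Set.singleton_subset_iff.mpr hvS₀),
      hspanv_neg, finrank_span_singleton hv0⟩
  have hub : ∀ k ∈ negSet L (Submodule.span ℝ {ψ, w}), k ≤ 1 := by
    rintro k ⟨V, hVle, hVneg, rfl⟩
    have hinj : Function.Injective ((innerFun (L w)).domRestrict V) := by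
      rw [← LinearMap.ker_eq_bot, LinearMap.ker_eq_bot']
      rintro ⟨u, hu⟩ hm
      have h0 : ⟪L w, u⟫ = 0 := hm
      obtain ⟨α, b, hcomb⟩ := Submodule.mem_span_pair.mp (hVle hu)
      rw [← hcomb, hinner_comb, hw] at h0
      have hα : α = 0 := by
        have : α * a = 0 := by linarith [h0]
        exact (mul_eq_zero.mp this).resolve_right hψ
      have hq0 : ⟪L u, u⟫ = 0 := by
        rw [← hcomb, hα, zero_smul, zero_add, map_smul, real_inner_smul_left,
          real_inner_smul_right, hw]
        ring
      have hu0 : u = 0 := by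
        by_contra hne
        exact absurd hq0 (ne_of_lt (hVneg u hu hne))
      exact Subtype.ext hu0
    have := LinearMap.finrank_le_finrank_of_injective hinj
    simpa using this
  have hS₀idx : negIdxOn L (Submodule.span ℝ {ψ, w}) = 1 :=
    le_antisymm (csSup_le (hnes _) hub) (le_csSup (hbdd _) hone_mem)
  -- n⁻(⊤) = n⁻(S₁) + 1
  set m : ℕ := negIdxOn L S₁ with hm_def
  -- ≥ direction: m + 1 ∈ negSet L ⊤
  have hge : m + 1 ≤ negIdxOn L ⊤ := by
    have hmem : m + 1 ∈ negSet L ⊤ := by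
      rcases Nat.eq_zero_or_pos m with hm0 | hmpos
      · rw [hm0]
        exact ⟨Submodule.span ℝ {v}, le_top, hspanv_neg, finrank_span_singleton hv0⟩
      · have hmmem : m ∈ negSet L S₁ := Nat.sSup_mem (hnes _) (hbdd _)
        obtain ⟨V₁, hV₁le, hV₁neg, hV₁rk⟩ := hmmem
        have : FiniteDimensional ℝ V₁ :=
          Module.finite_of_finrank_pos (by omega)
        have hvnotS₁ : ∀ u ∈ V₁, ⟪L v, u⟫ = 0 := by
          intro u hu
          obtain ⟨h1, h2⟩ := (hS₁ u).mp (hV₁le hu)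
          rw [hv_def, map_add, map_smul, inner_add_left, real_inner_smul_left,
            h1, h2]
          ring
        have hinf : V₁ ⊓ Submodule.span ℝ {v} = ⊥ := by
          rw [Submodule.eq_bot_iff]
          rintro x ⟨hx1, hx2⟩
          obtain ⟨t, rfl⟩ := Submodule.mem_span_singleton.mp hx2
          obtain ⟨h1, _⟩ := (hS₁ _).mp (hV₁le hx1)
          rw [real_inner_smul_right, hLwv] at h1
          have ht : t = 0 := (mul_eq_zero.mp h1).resolve_right hψ
          rw [ht, zero_smul]
        refine ⟨V₁ ⊔ Submodule.span ℝ {v}, le_top, ?_, ?_⟩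
        · intro u hu hne
          obtain ⟨u₁, hu₁, z, hz, rfl⟩ := Submodule.mem_sup.mp hu
          obtain ⟨t, rfl⟩ := Submodule.mem_span_singleton.mp hz
          have hq : ⟪L (u₁ + t • v), u₁ + t • v⟫ = ⟪L u₁, u₁⟫ - t^2 := by
            have := expand 1 t u₁ v
            rw [one_smul] at this
            rw [this, hqv, hsym2 u₁ v, hvnotS₁ u₁ hu₁]
            ring
          rw [hq]
          rcases eq_or_ne t 0 with ht | ht
          · have hu₁ne : u₁ ≠ 0 := by
              intro h; apply hne; rw [h, ht, zero_smul, add_zero]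
            have := hV₁neg u₁ hu₁ hu₁ne
            nlinarith
          · have hq₁ : ⟪L u₁, u₁⟫ ≤ 0 := by
              rcases eq_or_ne u₁ 0 with h | h
              · rw [h, map_zero, inner_zero_left]
              · exact le_of_lt (hV₁neg u₁ hu₁ h)
            nlinarith [mul_self_pos.mpr ht, sq t]
        · have := Submodule.finrank_sup_add_finrank_inf_eq V₁ (Submodule.span ℝ {v})
          rw [hinf, finrank_bot, hV₁rk, finrank_span_singleton hv0] at this
          omega
    exact le_csSup hfin hmem
  have hle : negIdxOn L ⊤ ≤ m + 1 := by
    have hnmem : negIdxOn L ⊤ ∈ negSet L ⊤ := Nat.sSup_mem (hnes _) hfin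
    obtain ⟨V, _, hVneg, hVrk⟩ := hnmem
    set n : ℕ := negIdxOn L ⊤
    rcases Nat.eq_zero_or_pos n with hn0 | hnpos
    · omega
    have hVfd : FiniteDimensional ℝ V := Module.finite_of_finrank_pos (hVrk ▸ hnpos)
    -- the kernel of ⟪L w, ·⟫ restricted to V
    set g : V →ₗ[ℝ] ℝ := (innerFun (L w)).domRestrict V with hg_def
    set K : Submodule ℝ H := Submodule.map V.subtype (LinearMap.ker g) with hK_def
    have hKV : K ≤ V := Submodule.map_subtype_le _ _
    have hKfd : FiniteDimensional ℝ K := Submodule.finiteDimensional_of_le hKV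
    have hKw : ∀ u ∈ K, ⟪L w, u⟫ = 0 := by
      rintro u ⟨⟨x, hx⟩, hker', rfl⟩
      exact LinearMap.mem_ker.mp hker'
    have hKrk : n ≤ Module.finrank ℝ K + 1 := by
      have h1 := LinearMap.finrank_range_add_finrank_ker g
      have h2 : Module.finrank ℝ (LinearMap.range g) ≤ 1 := by
        simpa using Submodule.finrank_le (LinearMap.range g)
      have h3 : Module.finrank ℝ K = Module.finrank ℝ (LinearMap.ker g) :=
        Submodule.finrank_map_subtype_eq V (LinearMap.ker g)
      rw [hVrk] at h1
      omega
    -- the projection-like map T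
    set T : H →ₗ[ℝ] H :=
      LinearMap.id - LinearMap.smulRight ((1/a) • innerFun (L ψ)) w with hT_def
    have hTapp : ∀ u : H, T u = u - ((1/a) * ⟪L ψ, u⟫) • w := by
      intro u
      simp [hT_def]
    -- T preserves the quadratic form on K and maps K into S₁
    have hTq : ∀ u ∈ K, ⟪L (T u), T u⟫ = ⟪L u, u⟫ := by
      intro u hu
      set t : ℝ := (1/a) * ⟪L ψ, u⟫
      have : T u = (1:ℝ) • u + (-t) • w := by
        rw [hTapp u, one_smul, neg_smul, sub_eq_add_neg]
      rw [this, expand, hw, hsym2 u w, hKw u hu]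
      ring
    have hTS₁ : ∀ u ∈ K, T u ∈ S₁ := by
      intro u hu
      refine (hS₁ _).mpr ⟨?_, ?_⟩
      · rw [hTapp u, inner_sub_right, real_inner_smul_right, hw, hKw u hu]
        ring
      · rw [hTapp u, inner_sub_right, real_inner_smul_right, haw]
        field_simp
        ring
    -- T is injective on K
    set j : K →ₗ[ℝ] H := T.domRestrict K with hj_def
    have hjker : LinearMap.ker j = ⊥ := by
      rw [LinearMap.ker_eq_bot']
      rintro ⟨u, hu⟩ hm'
      have hTu : T u = 0 := hm'
      set t : ℝ := (1/a) * ⟪L ψ, u⟫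
      have huw : u = t • w := by
        have h := hTapp u
        rw [hTu] at h
        exact sub_eq_zero.mp h.symm
      have hq0 : ⟪L u, u⟫ = 0 := by
        rw [huw, map_smul, real_inner_smul_left, real_inner_smul_right, hw]
        ring
      have hu0 : u = 0 := by
        by_contra hne
        exact absurd hq0 (ne_of_lt (hVneg u (hKV hu) hne))
      exact Subtype.ext hu0
    set V₂ : Submodule ℝ H := Submodule.map T K with hV₂_def
    have hV₂rk : Module.finrank ℝ V₂ = Module.finrank ℝ K := by
      have h1 := LinearMap.finrank_range_add_finrank_ker j
      rw [hjker, finrank_bot] at h1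
      rw [hj_def, LinearMap.range_domRestrict, ← hV₂_def] at h1
      omega
    have hV₂mem : Module.finrank ℝ V₂ ∈ negSet L S₁ := by
      refine ⟨V₂, ?_, ?_, rfl⟩
      · rintro x ⟨u, hu, rfl⟩
        exact hTS₁ u hu
      · rintro x ⟨u, hu, rfl⟩ hne
        have hune : u ≠ 0 := by
          intro h; apply hne; rw [h, map_zero]
        rw [hTq u hu]
        exact hVneg u (hKV hu) hune
    have hle2 : Module.finrank ℝ V₂ ≤ m := le_csSup (hbdd S₁) hV₂mem
    have h5 : n ≤ Module.finrank ℝ V₂ + 1 := by rw [hV₂rk]; exact hKrk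
    exact h5.trans (Nat.add_le_add_right hle2 1)
  exact ⟨hcompl, hS₀idx, le_antisymm hle hge⟩
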